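/- Let B be a positive natural number, let w : Fin B → ℝ take values in {0, 1} (the true bits), and let ŵ : Fin B → ℝ take values in [0, 1] (the soft decoded bits). Define the soft accuracy Acc_s = (1/B)·∑_b (1 − (ŵ_b − w_b)²), call bit b 'hard-correct' if |ŵ_b − w_b| < 1/2, and let ā = (number of hard-correct bits)/B be the hard-bit accuracy. If Acc_s ≥ τ for some real τ, then ā ≥ 4τ − 3. -/
import Mathlib


open scoped Classical

/-- **Soft-to-hard calibration.**
Let `w : Fin B → ℝ` be true bits in `{0,1}` and `what : Fin B → ℝ` soft bits in
`[0,1]`, with `B > 0`. Let the soft accuracy be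
`Acc_s = (1/B) * ∑ b, (1 - (what b - w b)²)` and let
`ā = #{b : |what b - w b| < 1/2} / B` be the hard-bit accuracy. If `Acc_s ≥ τ`
then `ā ≥ 4τ - 3`. -/
theorem soft_to_hard_calibration (B : ℕ) (hB : 0 < B)
    (w what : Fin B → ℝ)
    (hw : ∀ b, w b = 0 ∨ w b = 1)
    (hwhat : ∀ b, what b ∈ Set.Icc (0 : ℝ) 1)
    (τ : ℝ)
    (hAcc : τ ≤ (1 / (B : ℝ)) * ∑ b, (1 - (what b - w b) ^ 2)) :
    4 * τ - 3 ≤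
      ((Finset.univ.filter fun b : Fin B => |what b - w b| < 1 / 2).card : ℝ) / B := by
  set S := Finset.univ.filter fun b : Fin B => |what b - w b| < 1 / 2 with hS
  set T := Finset.univ.filter fun b : Fin B => ¬ |what b - w b| < 1 / 2 with hT
  have hBpos : (0 : ℝ) < B := by exact_mod_cast hB
  have hcard : (S.card : ℝ) + T.card = B := by
    have := Finset.card_filter_add_card_filter_not
      (s := (Finset.univ : Finset (Fin B)))
      (p := fun b : Fin B => |what b - w b| < 1 / 2)
    have : S.card + T.card = B := by simpa [hS, hT] using this
    exact_mod_cast this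
  -- each bad bit contributes at least 1/4 to the squared error
  have hE : (T.card : ℝ) * (1 / 4) ≤ ∑ b, (what b - w b) ^ 2 := by
    calc (T.card : ℝ) * (1 / 4) = ∑ _b ∈ T, (1 / 4 : ℝ) := by
          rw [Finset.sum_const, nsmul_eq_mul]
      _ ≤ ∑ b ∈ T, (what b - w b) ^ 2 := by
          apply Finset.sum_le_sum
          intro b hb
          have hb' : (1 / 2 : ℝ) ≤ |what b - w b| := by
            have := (Finset.mem_filter.mp hb).2
            linarith [not_lt.mp this]
          have : (1 / 2 : ℝ) ^ 2 ≤ |what b - w b| ^ 2 := by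
            exact pow_le_pow_left₀ (by norm_num) hb' 2
          calc (1 / 4 : ℝ) = (1 / 2 : ℝ) ^ 2 := by norm_num
            _ ≤ |what b - w b| ^ 2 := this
            _ = (what b - w b) ^ 2 := sq_abs _
      _ ≤ ∑ b, (what b - w b) ^ 2 := by
          apply Finset.sum_le_sum_of_subset_of_nonneg (Finset.filter_subset _ _)
          intro b _ _; positivity
  have hsum : ∑ b, (1 - (what b - w b) ^ 2) = (B : ℝ) - ∑ b, (what b - w b) ^ 2 := by
    rw [Finset.sum_sub_distrib]
    simp
  have hAcc' : τ * B ≤ (B : ℝ) - ∑ b, (what b - w b) ^ 2 := by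
    have := mul_le_mul_of_nonneg_right hAcc (le_of_lt hBpos)
    rw [hsum] at *
    calc τ * B ≤ ((1 / (B : ℝ)) * ((B : ℝ) - ∑ b, (what b - w b) ^ 2)) * B := this
      _ = (B : ℝ) - ∑ b, (what b - w b) ^ 2 := by
          field_simp
  -- combine: T.card/4 ≤ B - τB, so T.card ≤ 4(1-τ)B
  have hTle : (T.card : ℝ) ≤ 4 * (1 - τ) * B := by nlinarith
  rw [le_div_iff₀ hBpos]
  nlinarith
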